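/- Let G_B = ([m],[n],E_B) be a linear bipartite graph (any two left vertices share at most one common right neighbor), where each left vertex i represents an elementary event A_i = ⋀_{j ∈ N(i)} [X_j ∈ S_i^j] over independent random variables X_1,…,X_n each uniform on [0,1], with P(A_i) = p_i ∈ (0,1]. Let E_D be the set of pairs (i₀,i₁) of left vertices sharing a common right neighbor. Then Σ_{(i₀,i₁) ∈ E_D} P(A_{i₀} ∩ A_{i₁}) ≥ (min_i p_i)² · ( Σ_{i∈[m]} |N(i)| · p_i^{1/|N(i)|} − n ). -/

import Mathlib

open MeasureTheory
open scoped Classical ENNReal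

lemma bonferroni {α ι : Type*} [MeasurableSpace α] [LinearOrder ι]
    (μ : Measure α) (T : Finset ι) (f : ι → Set α) (hf : ∀ i, MeasurableSet (f i)) :
    ∑ i ∈ T, μ (f i) ≤ μ (⋃ i ∈ T, f i)
      + ∑ e ∈ (T ×ˢ T).filter (fun e => e.1 < e.2), μ (f e.1 ∩ f e.2) := by
  classical
  induction T using Finset.induction_on with
  | empty => simp
  | @insert a T ha ih =>
    have hsplit : ∑ e ∈ ((insert a T) ×ˢ (insert a T)).filter (fun e => e.1 < e.2),
        μ (f e.1 ∩ f e.2)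
        = ∑ e ∈ (T ×ˢ T).filter (fun e => e.1 < e.2), μ (f e.1 ∩ f e.2)
          + ∑ i ∈ T, μ (f a ∩ f i) := by
      have key : ∀ (s t : Finset ι), ∑ e ∈ (s ×ˢ t).filter (fun e => e.1 < e.2),
          μ (f e.1 ∩ f e.2)
          = ∑ x ∈ s, ∑ y ∈ t, if x < y then μ (f x ∩ f y) else 0 := by
        intro s t
        rw [Finset.sum_filter, Finset.sum_product]
      rw [key, key, Finset.sum_insert ha]
      have h1 : ∑ y ∈ insert a T, (if a < y then μ (f a ∩ f y) else 0)
          = ∑ y ∈ T, (if a < y then μ (f a ∩ f y) else 0) := by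
        rw [Finset.sum_insert ha]; simp
      have h2 : ∀ x ∈ T, ∑ y ∈ insert a T, (if x < y then μ (f x ∩ f y) else 0)
          = (if x < a then μ (f x ∩ f a) else 0)
            + ∑ y ∈ T, (if x < y then μ (f x ∩ f y) else 0) := by
        intro x _; rw [Finset.sum_insert ha]
      rw [h1, Finset.sum_congr rfl h2, Finset.sum_add_distrib]
      have h3 : ∑ y ∈ T, (if a < y then μ (f a ∩ f y) else 0)
          + ∑ x ∈ T, (if x < a then μ (f x ∩ f a) else 0)
          = ∑ i ∈ T, μ (f a ∩ f i) := by
        rw [← Finset.sum_add_distrib]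
        apply Finset.sum_congr rfl
        intro i hi
        have hne : a ≠ i := fun h => ha (h ▸ hi)
        rcases lt_or_gt_of_ne hne with h | h
        · simp [h, not_lt_of_gt h, h.not_gt]
        · simp [h, not_lt_of_gt h, Set.inter_comm]
      rw [← h3]; ring
    have hU : (⋃ i ∈ insert a T, f i) = f a ∪ ⋃ i ∈ T, f i := by
      simp [Set.biUnion_insert]
    have hT : MeasurableSet (⋃ i ∈ T, f i) := (T.measurableSet_biUnion (fun i _ => hf i))
    have h4 : μ (f a) + μ (⋃ i ∈ T, f i)
        = μ (f a ∪ ⋃ i ∈ T, f i) + μ (f a ∩ ⋃ i ∈ T, f i) :=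
      (measure_union_add_inter (f a) hT).symm
    have h5 : μ (f a ∩ ⋃ i ∈ T, f i) ≤ ∑ i ∈ T, μ (f a ∩ f i) := by
      rw [Set.inter_iUnion₂]
      exact (measure_biUnion_finset_le T _)
    rw [Finset.sum_insert ha, hsplit, hU]
    calc μ (f a) + ∑ i ∈ T, μ (f i)
        ≤ μ (f a) + (μ (⋃ i ∈ T, f i) + ∑ e ∈ (T ×ˢ T).filter (fun e => e.1 < e.2),
            μ (f e.1 ∩ f e.2)) := add_le_add_right ih _
      _ = (μ (f a ∪ ⋃ i ∈ T, f i) + μ (f a ∩ ⋃ i ∈ T, f i))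
            + ∑ e ∈ (T ×ˢ T).filter (fun e => e.1 < e.2), μ (f e.1 ∩ f e.2) := by
          rw [← h4]; ring
      _ ≤ (μ (f a ∪ ⋃ i ∈ T, f i) + ∑ i ∈ T, μ (f a ∩ f i))
            + ∑ e ∈ (T ×ˢ T).filter (fun e => e.1 < e.2), μ (f e.1 ∩ f e.2) :=
          add_le_add_left (add_le_add_right h5 _) _
      _ = μ (f a ∪ ⋃ i ∈ T, f i)
            + (∑ e ∈ (T ×ˢ T).filter (fun e => e.1 < e.2), μ (f e.1 ∩ f e.2)
              + ∑ i ∈ T, μ (f a ∩ f i)) := by ring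

/-- Lemma 4.3: for a linear bipartite graph with elementary events
A_i = ⋀_{j∈N(i)} [X_j ∈ S_i^j] over independent uniform variables on [0,1], the total
intersection probability over dependent pairs is at least
(min p)² · (Σ_i |N(i)|·p_i^{1/|N(i)|} − n). -/
theorem stmt5 (m n : ℕ) (hm : 0 < m)
    (N : Fin m → Finset (Fin n)) (hN : ∀ i, (N i).Nonempty)
    (hlin : ∀ i i' : Fin m, i ≠ i' → (N i ∩ N i').card ≤ 1)
    (S : Fin m → Fin n → Set ℝ)
    (hSmeas : ∀ i j, MeasurableSet (S i j))
    (hSsub : ∀ i j, S i j ⊆ Set.Icc 0 1)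
    (p : Fin m → ℝ)
    (hp : ∀ i, p i = ∏ j ∈ N i, (volume (S i j)).toReal)
    (hp0 : ∀ i, 0 < p i) (hp1 : ∀ i, p i ≤ 1) :
    (Finset.univ.inf' ⟨⟨0, hm⟩, Finset.mem_univ _⟩ p) ^ 2 *
      ((∑ i, ((N i).card : ℝ) * p i ^ ((1 : ℝ) / (N i).card)) - n) ≤
    ∑ e ∈ Finset.univ.filter
        (fun e : Fin m × Fin m => e.1 < e.2 ∧ (N e.1 ∩ N e.2).Nonempty),
      ((Measure.pi fun _ : Fin n => volume.restrict (Set.Icc (0:ℝ) 1))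
        {x : Fin n → ℝ |
          (∀ j ∈ N e.1, x j ∈ S e.1 j) ∧ (∀ j ∈ N e.2, x j ∈ S e.2 j)}).toReal := by
  classical
  set ν : Measure ℝ := volume.restrict (Set.Icc (0:ℝ) 1) with hνdef
  have hν : ∀ i j, ν (S i j) = volume (S i j) := by
    intro i j
    rw [hνdef, Measure.restrict_apply (hSmeas i j),
      Set.inter_eq_left.mpr (hSsub i j)]
  have hν1 : ν Set.univ = 1 := by
    rw [hνdef, Measure.restrict_apply_univ, Real.volume_Icc]
    norm_num
  have hle1 : ∀ (s : Set ℝ), ν s ≤ 1 := by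
    intro s; rw [← hν1]; exact measure_mono (Set.subset_univ s)
  have hfin : ∀ (s : Set ℝ), ν s ≠ ⊤ := fun s => (lt_of_le_of_lt (hle1 s) (by norm_num)).ne
  set minp : ℝ := Finset.univ.inf' ⟨⟨0, hm⟩, Finset.mem_univ _⟩ p with hminp
  have hminp0 : 0 < minp := by
    rw [hminp]; exact (Finset.lt_inf'_iff _).mpr fun i _ => hp0 i
  have hminple : ∀ i, minp ≤ p i := fun i => Finset.inf'_le p (Finset.mem_univ i)
  set T : Fin n → Finset (Fin m) := fun j => Finset.univ.filter (fun i => j ∈ N i) with hT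
  set bigF : Finset (Fin m × Fin m) :=
    Finset.univ.filter (fun e : Fin m × Fin m => e.1 < e.2) with hbigF
  -- Bonferroni per right vertex
  have hbonf : ∀ j : Fin n, ∑ i ∈ T j, ν (S i j) ≤ 1 +
      ∑ e ∈ ((T j) ×ˢ (T j)).filter (fun e => e.1 < e.2), ν (S e.1 j ∩ S e.2 j) := by
    intro j
    refine le_trans (bonferroni ν (T j) (fun i => S i j) (fun i => hSmeas i j)) ?_
    exact add_le_add_left (hle1 _) _
  -- reindex pairs
  have hpairs : ∀ j : Fin n, ((T j) ×ˢ (T j)).filter (fun e => e.1 < e.2) =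
      bigF.filter (fun e => j ∈ N e.1 ∧ j ∈ N e.2) := by
    intro j
    ext e
    simp only [Finset.mem_filter, Finset.mem_product, hT, hbigF, Finset.mem_univ,
      true_and, Finset.filter_filter]
    tauto
  set Q : ℝ≥0∞ := ∑ e ∈ bigF, ∑ j ∈ N e.1 ∩ N e.2, ν (S e.1 j ∩ S e.2 j) with hQ
  have hswap : ∑ j : Fin n, ∑ e ∈ ((T j) ×ˢ (T j)).filter (fun e => e.1 < e.2),
      ν (S e.1 j ∩ S e.2 j) = Q := by
    calc ∑ j : Fin n, ∑ e ∈ ((T j) ×ˢ (T j)).filter (fun e => e.1 < e.2),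
          ν (S e.1 j ∩ S e.2 j)
        = ∑ j : Fin n, ∑ e ∈ bigF,
            if j ∈ N e.1 ∧ j ∈ N e.2 then ν (S e.1 j ∩ S e.2 j) else 0 := by
          refine Finset.sum_congr rfl (fun j _ => ?_)
          rw [hpairs j, Finset.sum_filter]
      _ = ∑ e ∈ bigF, ∑ j : Fin n,
            if j ∈ N e.1 ∧ j ∈ N e.2 then ν (S e.1 j ∩ S e.2 j) else 0 :=
          Finset.sum_comm
      _ = Q := by
          refine Finset.sum_congr rfl (fun e _ => ?_)
          rw [← Finset.sum_filter]
          congr 1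
          ext j
          simp [Finset.mem_filter, Finset.mem_inter]
  have hB : ∑ j : Fin n, ∑ i ∈ T j, ν (S i j) ≤ (n : ℝ≥0∞) + Q := by
    calc ∑ j : Fin n, ∑ i ∈ T j, ν (S i j)
        ≤ ∑ j : Fin n, (1 + ∑ e ∈ ((T j) ×ˢ (T j)).filter (fun e => e.1 < e.2),
            ν (S e.1 j ∩ S e.2 j)) := Finset.sum_le_sum (fun j _ => hbonf j)
      _ = (n : ℝ≥0∞) + Q := by
          rw [Finset.sum_add_distrib, hswap, Finset.sum_const, Finset.card_univ,
            Fintype.card_fin]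
          simp [nsmul_eq_mul]
  -- finiteness
  have hQfin : Q ≠ ⊤ := by
    rw [hQ]
    refine (ENNReal.sum_lt_top.mpr (fun e _ => ?_)).ne
    exact ENNReal.sum_lt_top.mpr (fun j _ => (hfin _).lt_top)
  have hBfin : (∑ j : Fin n, ∑ i ∈ T j, ν (S i j)) ≠ ⊤ := by
    refine (ENNReal.sum_lt_top.mpr (fun j _ => ?_)).ne
    exact ENNReal.sum_lt_top.mpr (fun i _ => (hfin _).lt_top)
  -- real version
  have hBreal : ∑ j : Fin n, ∑ i ∈ T j, (ν (S i j)).toReal ≤ (n : ℝ) + Q.toReal := by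
    have h1 := ENNReal.toReal_mono (ENNReal.add_ne_top.mpr
      ⟨ENNReal.natCast_ne_top n, hQfin⟩) hB
    rw [ENNReal.toReal_add (ENNReal.natCast_ne_top n) hQfin, ENNReal.toReal_natCast] at h1
    rw [ENNReal.toReal_sum] at h1
    · refine le_trans (le_of_eq ?_) h1
      refine Finset.sum_congr rfl (fun j _ => ?_)
      rw [ENNReal.toReal_sum (fun i _ => hfin _)]
    · intro j _
      exact (ENNReal.sum_lt_top.mpr (fun i _ => (hfin _).lt_top)).ne
  -- AM-GM
  have hamgm : ∀ i : Fin m, ((N i).card : ℝ) * p i ^ ((1 : ℝ) / (N i).card)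
      ≤ ∑ j ∈ N i, (ν (S i j)).toReal := by
    intro i
    have hd : 0 < (N i).card := Finset.card_pos.mpr (hN i)
    have hd0 : (0:ℝ) < ((N i).card : ℝ) := by exact_mod_cast hd
    have key := Real.geom_mean_le_arith_mean_weighted (N i)
      (fun _ => 1 / ((N i).card : ℝ)) (fun j => (volume (S i j)).toReal)
      (fun _ _ => by positivity)
      (by rw [Finset.sum_const, nsmul_eq_mul]; field_simp)
      (fun j _ => ENNReal.toReal_nonneg)
    rw [Real.finset_prod_rpow (N i) _ (fun j _ => ENNReal.toReal_nonneg), ← hp i,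
      ← Finset.mul_sum] at key
    have h2 : ∑ j ∈ N i, (ν (S i j)).toReal = ∑ j ∈ N i, (volume (S i j)).toReal :=
      Finset.sum_congr rfl (fun j _ => by rw [hν])
    rw [h2]
    calc ((N i).card : ℝ) * p i ^ ((1 : ℝ) / (N i).card)
        ≤ ((N i).card : ℝ) * (1 / ((N i).card : ℝ) * ∑ j ∈ N i, (volume (S i j)).toReal) :=
          mul_le_mul_of_nonneg_left key hd0.le
      _ = ∑ j ∈ N i, (volume (S i j)).toReal := by field_simp
  -- swap real double sum
  have hswap2 : ∑ i : Fin m, ∑ j ∈ N i, (ν (S i j)).toReal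
      = ∑ j : Fin n, ∑ i ∈ T j, (ν (S i j)).toReal := by
    calc ∑ i : Fin m, ∑ j ∈ N i, (ν (S i j)).toReal
        = ∑ i : Fin m, ∑ j : Fin n, if j ∈ N i then (ν (S i j)).toReal else 0 := by
          refine Finset.sum_congr rfl (fun i _ => ?_)
          rw [Finset.sum_ite_mem, Finset.univ_inter]
      _ = ∑ j : Fin n, ∑ i : Fin m, if j ∈ N i then (ν (S i j)).toReal else 0 :=
          Finset.sum_comm
      _ = ∑ j : Fin n, ∑ i ∈ T j, (ν (S i j)).toReal := by
          refine Finset.sum_congr rfl (fun j _ => ?_)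
          rw [hT, Finset.sum_filter]
  have hA : (∑ i, ((N i).card : ℝ) * p i ^ ((1 : ℝ) / (N i).card)) - n ≤ Q.toReal := by
    have h1 : ∑ i, ((N i).card : ℝ) * p i ^ ((1 : ℝ) / (N i).card)
        ≤ ∑ j : Fin n, ∑ i ∈ T j, (ν (S i j)).toReal := by
      rw [← hswap2]; exact Finset.sum_le_sum (fun i _ => hamgm i)
    linarith [le_trans h1 hBreal]
  -- Q.toReal as a real double sum
  have hQreal : Q.toReal = ∑ e ∈ bigF, ∑ j ∈ N e.1 ∩ N e.2, (ν (S e.1 j ∩ S e.2 j)).toReal := by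
    rw [hQ, ENNReal.toReal_sum (fun e _ =>
      (ENNReal.sum_lt_top.mpr (fun j _ => (hfin _).lt_top)).ne)]
    exact Finset.sum_congr rfl (fun e _ => ENNReal.toReal_sum (fun j _ => hfin _))
  -- per-pair bound
  have hpair : ∀ e ∈ Finset.univ.filter
      (fun e : Fin m × Fin m => e.1 < e.2 ∧ (N e.1 ∩ N e.2).Nonempty),
      minp ^ 2 * ∑ j ∈ N e.1 ∩ N e.2, (ν (S e.1 j ∩ S e.2 j)).toReal ≤
      ((Measure.pi fun _ : Fin n => ν)
        {x : Fin n → ℝ |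
          (∀ j ∈ N e.1, x j ∈ S e.1 j) ∧ (∀ j ∈ N e.2, x j ∈ S e.2 j)}).toReal := by
    intro e he
    simp only [Finset.mem_filter, Finset.mem_univ, true_and] at he
    obtain ⟨hlt, ⟨j₀, hj₀⟩⟩ := he
    have hsing : N e.1 ∩ N e.2 = {j₀} := by
      apply Finset.eq_singleton_iff_unique_mem.mpr
      exact ⟨hj₀, fun x hx =>
        Finset.card_le_one.mp (hlin e.1 e.2 (ne_of_lt hlt)) x hx j₀ hj₀⟩
    have hj₀1 : j₀ ∈ N e.1 := (Finset.mem_inter.mp hj₀).1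
    have hj₀2 : j₀ ∈ N e.2 := (Finset.mem_inter.mp hj₀).2
    set C : Fin n → Set ℝ := fun j =>
      (if j ∈ N e.1 then S e.1 j else Set.univ) ∩
      (if j ∈ N e.2 then S e.2 j else Set.univ) with hC
    have hset : {x : Fin n → ℝ |
        (∀ j ∈ N e.1, x j ∈ S e.1 j) ∧ (∀ j ∈ N e.2, x j ∈ S e.2 j)}
        = Set.pi Set.univ C := by
      ext x
      simp only [Set.mem_setOf_eq, Set.mem_univ_pi, hC, Set.mem_inter_iff]
      constructor
      · rintro ⟨h1, h2⟩ j
        constructor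
        · split_ifs with h; exacts [h1 j h, Set.mem_univ _]
        · split_ifs with h; exacts [h2 j h, Set.mem_univ _]
      · intro h
        refine ⟨fun j hj => ?_, fun j hj => ?_⟩
        · have := (h j).1; rwa [if_pos hj] at this
        · have := (h j).2; rwa [if_pos hj] at this
    rw [hset, hsing, Finset.sum_singleton, Measure.pi_pi, ENNReal.toReal_prod]
    have hCj₀ : C j₀ = S e.1 j₀ ∩ S e.2 j₀ := by
      rw [hC]; simp [hj₀1, hj₀2]
    rw [← Finset.mul_prod_erase Finset.univ _ (Finset.mem_univ j₀), hCj₀,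
      mul_comm ((ν (S e.1 j₀ ∩ S e.2 j₀)).toReal)]
    refine mul_le_mul_of_nonneg_right ?_ ENNReal.toReal_nonneg
    -- minp ^ 2 ≤ ∏ over erase
    set a : Fin n → ℝ := fun j => if j ∈ N e.1 then (ν (S e.1 j)).toReal else 1 with ha
    set b : Fin n → ℝ := fun j => if j ∈ N e.2 then (ν (S e.2 j)).toReal else 1 with hb
    have hval : ∀ j ∈ Finset.univ.erase j₀, (ν (C j)).toReal = a j * b j := by
      intro j hj
      have hjne : j ≠ j₀ := (Finset.mem_erase.mp hj).1
      have hnot : ¬(j ∈ N e.1 ∧ j ∈ N e.2) := by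
        rintro ⟨h1', h2'⟩
        exact hjne (by
          have hmem : j ∈ N e.1 ∩ N e.2 := Finset.mem_inter.mpr ⟨h1', h2'⟩
          rwa [hsing, Finset.mem_singleton] at hmem)
      rw [hC, ha, hb]
      by_cases h1' : j ∈ N e.1 <;> by_cases h2' : j ∈ N e.2
      · exact absurd ⟨h1', h2'⟩ hnot
      · simp [h1', h2', Set.inter_univ]
      · simp [h1', h2', Set.univ_inter]
      · simp [h1', h2', Set.inter_univ, hν1]
    rw [Finset.prod_congr rfl hval, Finset.prod_mul_distrib]
    have hinter : ∀ (i : Fin m), (Finset.univ.erase j₀) ∩ N i = (N i).erase j₀ := by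
      intro i; ext j
      simp only [Finset.mem_inter, Finset.mem_erase, Finset.mem_univ, true_and, and_comm]
    have hprodp : ∀ (i : Fin m), ∏ j ∈ N i, (ν (S i j)).toReal = p i := by
      intro i; rw [hp i]
      exact Finset.prod_congr rfl (fun j _ => by rw [hν])
    have hfac1 : ∀ (i : Fin m) (j : Fin n), (ν (S i j)).toReal ≤ 1 := by
      intro i j
      have := ENNReal.toReal_mono (by norm_num) (hle1 (S i j))
      simpa using this
    have hkey : ∀ (i : Fin m) (hj : j₀ ∈ N i),
        minp ≤ ∏ j ∈ (N i).erase j₀, (ν (S i j)).toReal := by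
      intro i hj
      have hprod : (ν (S i j₀)).toReal * ∏ j ∈ (N i).erase j₀, (ν (S i j)).toReal = p i := by
        rw [← hprodp i]
        exact Finset.mul_prod_erase (N i) (fun j => (ν (S i j)).toReal) hj
      have hnn : 0 ≤ ∏ j ∈ (N i).erase j₀, (ν (S i j)).toReal :=
        Finset.prod_nonneg (fun j _ => ENNReal.toReal_nonneg)
      calc minp ≤ p i := hminple i
        _ = (ν (S i j₀)).toReal * ∏ j ∈ (N i).erase j₀, (ν (S i j)).toReal := hprod.symm
        _ ≤ 1 * ∏ j ∈ (N i).erase j₀, (ν (S i j)).toReal :=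
            mul_le_mul_of_nonneg_right (hfac1 i j₀) hnn
        _ = _ := one_mul _
    have hA1 : minp ≤ ∏ j ∈ Finset.univ.erase j₀, a j := by
      rw [ha, Finset.prod_ite_mem (Finset.univ.erase j₀) (N e.1)
        (fun j => (ν (S e.1 j)).toReal), hinter e.1]
      exact hkey e.1 hj₀1
    have hB1 : minp ≤ ∏ j ∈ Finset.univ.erase j₀, b j := by
      rw [hb, Finset.prod_ite_mem (Finset.univ.erase j₀) (N e.2)
        (fun j => (ν (S e.2 j)).toReal), hinter e.2]
      exact hkey e.2 hj₀2
    calc minp ^ 2 = minp * minp := sq minp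
      _ ≤ (∏ j ∈ Finset.univ.erase j₀, a j) * ∏ j ∈ Finset.univ.erase j₀, b j :=
          mul_le_mul hA1 hB1 hminp0.le (le_trans hminp0.le hA1)
  -- assemble
  calc minp ^ 2 * ((∑ i, ((N i).card : ℝ) * p i ^ ((1 : ℝ) / (N i).card)) - n)
      ≤ minp ^ 2 * Q.toReal := by
        exact mul_le_mul_of_nonneg_left hA (by positivity)
    _ = ∑ e ∈ bigF, minp ^ 2 * ∑ j ∈ N e.1 ∩ N e.2, (ν (S e.1 j ∩ S e.2 j)).toReal := by
        rw [hQreal, Finset.mul_sum]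
    _ = ∑ e ∈ Finset.univ.filter
          (fun e : Fin m × Fin m => e.1 < e.2 ∧ (N e.1 ∩ N e.2).Nonempty),
          minp ^ 2 * ∑ j ∈ N e.1 ∩ N e.2, (ν (S e.1 j ∩ S e.2 j)).toReal := by
        have hff : Finset.univ.filter
            (fun e : Fin m × Fin m => e.1 < e.2 ∧ (N e.1 ∩ N e.2).Nonempty)
            = bigF.filter (fun e => (N e.1 ∩ N e.2).Nonempty) := by
          rw [hbigF, Finset.filter_filter]
        rw [hff]
        refine (Finset.sum_filter_of_ne (fun e _ hne => ?_)).symm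
        by_contra hempty
        rw [Finset.not_nonempty_iff_eq_empty] at hempty
        rw [hempty] at hne
        simp at hne
    _ ≤ _ := Finset.sum_le_sum hpair
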